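/- arXiv:2105.09837 — 4 statements merged into one kernel-verified Lean document; each statement's English description precedes it below -/
import Mathlib

section
/- Let H be a real inner product space, let ν > 0, ρ > 0, S ≥ 0, and let f : H → H be Lipschitz continuous with constant S. Let z, z⁺, q, p, u ∈ H with u = ν(q − f(z)). Suppose q⁺ minimizes over H the function Φ(q') = (ν/2)‖f(z⁺) − q'‖² + ⟨u, p − q'⟩ + (ρ/2)‖p − q'‖², and set u⁺ = u + ρ(p − q⁺). Then [(ν/2)‖f(z⁺) − q‖² + ⟨u, p − q⟩ + (ρ/2)‖p − q‖²] − [(ν/2)‖f(z⁺) − q⁺‖² + ⟨u⁺, p − q⁺⟩ + (ρ/2)‖p − q⁺‖²] ≥ (ρ/2 − 2ν²/ρ − ν/2)‖q⁺ − q‖² − (2ν²S²/ρ)‖z⁺ − z‖². -/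
open scoped RealInnerProductSpace

set_option maxHeartbeats 1000000 in
/-- Per-layer joint q-and-dual-update decrease lemma of pdADMM. -/
theorem stmt6 {H : Type*} [NormedAddCommGroup H] [InnerProductSpace ℝ H]
    (ν ρ S : ℝ) (hν : 0 < ν) (hρ : 0 < ρ) (hS : 0 ≤ S) (f : H → H)
    (hf : ∀ x y : H, ‖f x - f y‖ ≤ S * ‖x - y‖)
    (z zplus q p u qplus uplus : H)
    (hu : u = ν • (q - f z))
    (hmin : ∀ q' : H,
      (ν / 2) * ‖f zplus - qplus‖ ^ 2 + ⟪u, p - qplus⟫ + (ρ / 2) * ‖p - qplus‖ ^ 2 ≤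
      (ν / 2) * ‖f zplus - q'‖ ^ 2 + ⟪u, p - q'⟫ + (ρ / 2) * ‖p - q'‖ ^ 2)
    (hup : uplus = u + ρ • (p - qplus)) :
    ((ν / 2) * ‖f zplus - q‖ ^ 2 + ⟪u, p - q⟫ + (ρ / 2) * ‖p - q‖ ^ 2) -
      ((ν / 2) * ‖f zplus - qplus‖ ^ 2 + ⟪uplus, p - qplus⟫ + (ρ / 2) * ‖p - qplus‖ ^ 2) ≥
      (ρ / 2 - 2 * ν ^ 2 / ρ - ν / 2) * ‖qplus - q‖ ^ 2 -
        (2 * ν ^ 2 * S ^ 2 / ρ) * ‖zplus - z‖ ^ 2 := by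
  obtain ⟨g, hg⟩ : ∃ g : H, g = ν • (qplus - f zplus) - u + ρ • (qplus - p) := ⟨_, rfl⟩
  -- quadratic expansion of the objective around qplus
  have hΦ : ∀ q' : H,
      ((ν / 2) * ‖f zplus - q'‖ ^ 2 + ⟪u, p - q'⟫ + (ρ / 2) * ‖p - q'‖ ^ 2) -
      ((ν / 2) * ‖f zplus - qplus‖ ^ 2 + ⟪u, p - qplus⟫ + (ρ / 2) * ‖p - qplus‖ ^ 2) =
      ⟪g, q' - qplus⟫ + ((ν + ρ) / 2) * ‖q' - qplus‖ ^ 2 := by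
    intro q'
    have e1 : f zplus - q' = (f zplus - qplus) - (q' - qplus) := by abel
    have e2 : p - q' = (p - qplus) - (q' - qplus) := by abel
    have c1 : ⟪qplus - f zplus, q' - qplus⟫ = -⟪f zplus - qplus, q' - qplus⟫ := by
      rw [← inner_neg_left, neg_sub]
    have c2 : ⟪qplus - p, q' - qplus⟫ = -⟪p - qplus, q' - qplus⟫ := by
      rw [← inner_neg_left, neg_sub]
    have hrhs : ⟪g, q' - qplus⟫ =
        -(ν * ⟪f zplus - qplus, q' - qplus⟫) - ⟪u, q' - qplus⟫
          - ρ * ⟪p - qplus, q' - qplus⟫ := by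
      rw [hg, inner_add_left, inner_sub_left, real_inner_smul_left, real_inner_smul_left,
        c1, c2]
      ring
    rw [e1, e2, norm_sub_sq_real (f zplus - qplus), norm_sub_sq_real (p - qplus),
      inner_sub_right u (p - qplus) (q' - qplus), hrhs]
    ring
  -- gradient vanishes at the minimizer
  have hg0 : g = 0 := by
    have h := hmin (qplus - (1 / (ν + ρ)) • g)
    have h2 := hΦ (qplus - (1 / (ν + ρ)) • g)
    have e : qplus - (1 / (ν + ρ)) • g - qplus = -((1 / (ν + ρ)) • g) := by abel
    rw [e] at h2
    have hpos : 0 < ν + ρ := by linarith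
    have hge : (0:ℝ) ≤ ⟪g, -((1 / (ν + ρ)) • g)⟫
        + ((ν + ρ) / 2) * ‖-((1 / (ν + ρ)) • g)‖ ^ 2 := by
      rw [← h2]; linarith [h]
    rw [inner_neg_right, real_inner_smul_right, real_inner_self_eq_norm_sq,
      norm_neg, norm_smul, Real.norm_eq_abs, abs_of_pos (by positivity : (0:ℝ) < 1 / (ν + ρ)),
      mul_pow] at hge
    have h3 : -(1 / (ν + ρ) * ‖g‖ ^ 2) + ((ν + ρ) / 2) * ((1 / (ν + ρ)) ^ 2 * ‖g‖ ^ 2)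
        = -(1 / (2 * (ν + ρ))) * ‖g‖ ^ 2 := by field_simp; ring
    have h4 : (0:ℝ) ≤ -(1 / (2 * (ν + ρ))) * ‖g‖ ^ 2 := by linarith [hge, h3]
    have h5 : (0:ℝ) < 1 / (2 * (ν + ρ)) := by positivity
    have hns : ‖g‖ ^ 2 ≤ 0 := by
      by_contra hc
      push_neg at hc
      nlinarith [mul_pos h5 hc]
    have hgn : ‖g‖ = 0 := by nlinarith [sq_nonneg ‖g‖, norm_nonneg g]
    simpa using hgn
  -- exact decrease
  have hdec := hΦ q
  rw [hg0, inner_zero_left, zero_add] at hdec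
  -- uplus inner term
  have hup' : ⟪uplus, p - qplus⟫ = ⟪u, p - qplus⟫ + ρ * ‖p - qplus‖ ^ 2 := by
    rw [hup, inner_add_left, real_inner_smul_left, real_inner_self_eq_norm_sq]
  -- dual residual identity
  have h0 : ν • (qplus - f zplus) - u + ρ • (qplus - p) = 0 := by rw [← hg]; exact hg0
  have hres : ρ • (p - qplus) = ν • ((qplus - q) - (f zplus - f z)) := by
    rw [hu] at h0
    have e : ρ • (qplus - p) = -(ρ • (p - qplus)) := by rw [← smul_neg, neg_sub]
    rw [e] at h0
    have h1 : ρ • (p - qplus) - (ν • (qplus - f zplus) - ν • (q - f z)) =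
        -(ν • (qplus - f zplus) - ν • (q - f z) + -(ρ • (p - qplus))) := by abel
    have h2 : ρ • (p - qplus) = ν • (qplus - f zplus) - ν • (q - f z) := by
      have := h1.trans (by rw [h0, neg_zero])
      exact sub_eq_zero.mp this
    rw [h2, ← smul_sub]
    congr 1
    abel
  -- norm bound on the residual
  have hbound : ρ * ‖p - qplus‖ ^ 2 ≤ (2 * ν ^ 2 / ρ) * ‖qplus - q‖ ^ 2 +
      (2 * ν ^ 2 * S ^ 2 / ρ) * ‖zplus - z‖ ^ 2 := by
    have h1 : ρ * ‖p - qplus‖ = ‖ρ • (p - qplus)‖ := by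
      rw [norm_smul, Real.norm_eq_abs, abs_of_pos hρ]
    have h2 : ‖ρ • (p - qplus)‖ ≤ ν * ‖qplus - q‖ + ν * (S * ‖zplus - z‖) := by
      rw [hres]
      calc ‖ν • ((qplus - q) - (f zplus - f z))‖
          = ν * ‖(qplus - q) - (f zplus - f z)‖ := by
            rw [norm_smul, Real.norm_eq_abs, abs_of_pos hν]
        _ ≤ ν * (‖qplus - q‖ + ‖f zplus - f z‖) := by
            gcongr
            exact norm_sub_le _ _
        _ ≤ ν * ‖qplus - q‖ + ν * (S * ‖zplus - z‖) := by
            rw [mul_add]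
            gcongr
            exact hf zplus z
    have h3 : ρ * ‖p - qplus‖ ≤ ν * ‖qplus - q‖ + ν * (S * ‖zplus - z‖) := by rw [h1]; exact h2
    have hnn1 : 0 ≤ ‖p - qplus‖ := norm_nonneg _
    have hnn2 : 0 ≤ ‖qplus - q‖ := norm_nonneg _
    have hnn3 : 0 ≤ ‖zplus - z‖ := norm_nonneg _
    have hsq : (ρ * ‖p - qplus‖) ^ 2 ≤ (ν * ‖qplus - q‖ + ν * (S * ‖zplus - z‖)) ^ 2 :=
      pow_le_pow_left₀ (by positivity) h3 2
    have key : ρ ^ 2 * ‖p - qplus‖ ^ 2 ≤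
        2 * ν ^ 2 * ‖qplus - q‖ ^ 2 + 2 * ν ^ 2 * S ^ 2 * ‖zplus - z‖ ^ 2 := by
      nlinarith [hsq, sq_nonneg (ν * ‖qplus - q‖ - ν * (S * ‖zplus - z‖))]
    rw [div_mul_eq_mul_div, div_mul_eq_mul_div, ← add_div, le_div_iff₀ hρ]
    linarith [key]
  -- conclude
  have hnorm : ‖q - qplus‖ = ‖qplus - q‖ := norm_sub_rev q qplus
  rw [hup']
  have hfin : ((ν / 2) * ‖f zplus - q‖ ^ 2 + ⟪u, p - q⟫ + (ρ / 2) * ‖p - q‖ ^ 2) -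
      ((ν / 2) * ‖f zplus - qplus‖ ^ 2 + (⟪u, p - qplus⟫ + ρ * ‖p - qplus‖ ^ 2) +
        (ρ / 2) * ‖p - qplus‖ ^ 2) =
      ((ν + ρ) / 2) * ‖q - qplus‖ ^ 2 - ρ * ‖p - qplus‖ ^ 2 := by linarith [hdec]
  rw [hfin, hnorm]
  nlinarith [mul_nonneg hν.le (sq_nonneg ‖qplus - q‖)]
end

section
/- Let ν > 0 and a, q, z₀ ∈ ℝ, and define g : ℝ → ℝ by g(z) = (ν/2)(z − a)² + (ν/2)(q − max(z, 0))² + (ν/2)(z − z₀)². Let z₋ = min((a + z₀)/2, 0) and z₊ = max((a + z₀ + q)/3, 0). Then for every z ∈ ℝ, g(z) ≥ min(g(z₋), g(z₊)); in particular the minimum of g over ℝ is attained at z₋ or z₊. -/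
/-- Closed-form solution of the scalar z-subproblem of pdADMM with ReLU activation. -/
theorem stmt8 (ν a q z₀ : ℝ) (hν : 0 < ν) (g : ℝ → ℝ)
    (hg : ∀ z : ℝ, g z =
      (ν / 2) * (z - a) ^ 2 + (ν / 2) * (q - max z 0) ^ 2 + (ν / 2) * (z - z₀) ^ 2)
    (zm zp : ℝ) (hzm : zm = min ((a + z₀) / 2) 0) (hzp : zp = max ((a + z₀ + q) / 3) 0) :
    (∀ z : ℝ, g z ≥ min (g zm) (g zp)) ∧
    ((∀ z : ℝ, g zm ≤ g z) ∨ (∀ z : ℝ, g zp ≤ g z)) := by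
  have hzm0 : zm ≤ 0 := hzm ▸ min_le_right _ _
  have hzp0 : 0 ≤ zp := hzp ▸ le_max_right _ _
  have key : ∀ z : ℝ, g z ≥ min (g zm) (g zp) := by
    intro z
    rcases le_total z 0 with hz | hz
    · refine le_trans (min_le_left _ _) ?_
      rw [hg, hg, max_eq_right hz, max_eq_right hzm0]
      rcases le_total ((a + z₀) / 2) 0 with h | h
      · rw [hzm, min_eq_left h]; nlinarith [sq_nonneg (z - (a + z₀)/2), hν.le]
      · rw [hzm, min_eq_right h]; nlinarith [sq_nonneg z, mul_nonneg (neg_nonneg.2 hz) h, hν.le]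
    · refine le_trans (min_le_right _ _) ?_
      rw [hg, hg, max_eq_left hz, max_eq_left hzp0]
      rcases le_total ((a + z₀ + q) / 3) 0 with h | h
      · rw [hzp, max_eq_right h]
        nlinarith [sq_nonneg z, mul_nonneg hz (neg_nonneg.2 h), hν.le]
      · rw [hzp, max_eq_left h]; nlinarith [sq_nonneg (z - (a + z₀ + q)/3), hν.le]
  refine ⟨key, ?_⟩
  rcases le_total (g zm) (g zp) with h | h
  · exact Or.inl fun z => le_trans (by rw [min_eq_left h]) (key z)
  · exact Or.inr fun z => le_trans (by rw [min_eq_right h]) (key z)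
end

section
/- Let W, W' be real m×n matrices and p, p' ∈ ℝⁿ, b, b', z, z' ∈ ℝᵐ. Suppose ‖W‖ ≤ N_W, ‖W'‖ ≤ N_W (operator norms), ‖p‖ ≤ N_p, ‖b‖ ≤ N_b, ‖z‖ ≤ N_z for nonnegative constants N_W, N_p, N_b, N_z. Then ‖W'ᵀW'p' − WᵀWp + W'ᵀb' − Wᵀb − W'ᵀz' + Wᵀz‖ ≤ N_W²‖p' − p‖ + (2N_W N_p + N_b + N_z)‖W' − W‖ + N_W‖b' − b‖ + N_W‖z' − z‖. -/
open scoped Matrix Matrix.Norms.L2Operator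

private lemma apply_le {m n : ℕ} (A : Matrix (Fin m) (Fin n) ℝ)
    (x : EuclideanSpace ℝ (Fin n)) :
    ‖Matrix.toEuclideanLin A x‖ ≤ ‖A‖ * ‖x‖ :=
  A.l2_opNorm_mulVec x

private lemma norm_transpose {m n : ℕ} (A : Matrix (Fin m) (Fin n) ℝ) :
    ‖Aᵀ‖ = ‖A‖ := by
  have : Aᵀ = Aᴴ := by ext i j; simp [Matrix.conjTranspose]
  rw [this, Matrix.l2_opNorm_conjTranspose]

/-- p-component bound in the Bounded Subgradient lemma of pdADMM, for real `m×n`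
matrices with the L2 operator norm (matrices act on Euclidean spaces via
`Matrix.toEuclideanLin`, and `ᵀ` is the transpose). -/
theorem stmt14 {m n : ℕ} (W W' : Matrix (Fin m) (Fin n) ℝ)
    (p p' : EuclideanSpace ℝ (Fin n)) (b b' z z' : EuclideanSpace ℝ (Fin m))
    (NW Np Nb Nz : ℝ) (hNW : 0 ≤ NW) (hNp : 0 ≤ Np) (hNb : 0 ≤ Nb) (hNz : 0 ≤ Nz)
    (hW : ‖W‖ ≤ NW) (hW' : ‖W'‖ ≤ NW) (hp : ‖p‖ ≤ Np) (hb : ‖b‖ ≤ Nb) (hz : ‖z‖ ≤ Nz) :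
    ‖Matrix.toEuclideanLin W'ᵀ (Matrix.toEuclideanLin W' p') -
        Matrix.toEuclideanLin Wᵀ (Matrix.toEuclideanLin W p) +
        Matrix.toEuclideanLin W'ᵀ b' - Matrix.toEuclideanLin Wᵀ b -
        Matrix.toEuclideanLin W'ᵀ z' + Matrix.toEuclideanLin Wᵀ z‖ ≤
      NW ^ 2 * ‖p' - p‖ + (2 * NW * Np + Nb + Nz) * ‖W' - W‖ +
        NW * ‖b' - b‖ + NW * ‖z' - z‖ := by
  have key : Matrix.toEuclideanLin W'ᵀ (Matrix.toEuclideanLin W' p') -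
        Matrix.toEuclideanLin Wᵀ (Matrix.toEuclideanLin W p) +
        Matrix.toEuclideanLin W'ᵀ b' - Matrix.toEuclideanLin Wᵀ b -
        Matrix.toEuclideanLin W'ᵀ z' + Matrix.toEuclideanLin Wᵀ z =
      Matrix.toEuclideanLin W'ᵀ (Matrix.toEuclideanLin W' (p' - p)) +
      Matrix.toEuclideanLin W'ᵀ (Matrix.toEuclideanLin (W' - W) p) +
      Matrix.toEuclideanLin (W' - W)ᵀ (Matrix.toEuclideanLin W p) +
      Matrix.toEuclideanLin W'ᵀ (b' - b) +
      Matrix.toEuclideanLin (W' - W)ᵀ b -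
      Matrix.toEuclideanLin W'ᵀ (z' - z) -
      Matrix.toEuclideanLin (W' - W)ᵀ z := by
    simp only [Matrix.transpose_sub, map_sub, LinearMap.sub_apply]
    abel
  rw [key]
  have hWW : ‖W' - W‖ = ‖(W' - W)ᵀ‖ := (norm_transpose _).symm
  have hW'T : ‖W'ᵀ‖ ≤ NW := by rw [norm_transpose]; exact hW'
  have t1 : ‖Matrix.toEuclideanLin W'ᵀ (Matrix.toEuclideanLin W' (p' - p))‖ ≤
      NW ^ 2 * ‖p' - p‖ := by
    calc _ ≤ ‖W'ᵀ‖ * ‖Matrix.toEuclideanLin W' (p' - p)‖ := apply_le _ _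
    _ ≤ NW * (NW * ‖p' - p‖) := by
        apply mul_le_mul hW'T ((apply_le _ _).trans (by gcongr)) (norm_nonneg _) hNW
    _ = NW ^ 2 * ‖p' - p‖ := by ring
  have t2 : ‖Matrix.toEuclideanLin W'ᵀ (Matrix.toEuclideanLin (W' - W) p)‖ ≤
      NW * Np * ‖W' - W‖ := by
    calc _ ≤ ‖W'ᵀ‖ * ‖Matrix.toEuclideanLin (W' - W) p‖ := apply_le _ _
    _ ≤ NW * (‖W' - W‖ * Np) := by
        apply mul_le_mul hW'T ((apply_le _ _).trans (by gcongr)) (norm_nonneg _) hNW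
    _ = NW * Np * ‖W' - W‖ := by ring
  have t3 : ‖Matrix.toEuclideanLin (W' - W)ᵀ (Matrix.toEuclideanLin W p)‖ ≤
      NW * Np * ‖W' - W‖ := by
    calc _ ≤ ‖(W' - W)ᵀ‖ * ‖Matrix.toEuclideanLin W p‖ := apply_le _ _
    _ ≤ ‖(W' - W)ᵀ‖ * (NW * Np) := by
        gcongr
        exact (apply_le _ _).trans (by gcongr)
    _ = NW * Np * ‖W' - W‖ := by rw [← hWW]; ring
  have t4 : ‖Matrix.toEuclideanLin W'ᵀ (b' - b)‖ ≤ NW * ‖b' - b‖ :=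
    (apply_le _ _).trans (by gcongr)
  have t5 : ‖Matrix.toEuclideanLin (W' - W)ᵀ b‖ ≤ Nb * ‖W' - W‖ := by
    calc _ ≤ ‖(W' - W)ᵀ‖ * ‖b‖ := apply_le _ _
    _ ≤ ‖(W' - W)ᵀ‖ * Nb := by gcongr
    _ = Nb * ‖W' - W‖ := by rw [← hWW]; ring
  have t6 : ‖Matrix.toEuclideanLin W'ᵀ (z' - z)‖ ≤ NW * ‖z' - z‖ :=
    (apply_le _ _).trans (by gcongr)
  have t7 : ‖Matrix.toEuclideanLin (W' - W)ᵀ z‖ ≤ Nz * ‖W' - W‖ := by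
    calc _ ≤ ‖(W' - W)ᵀ‖ * ‖z‖ := apply_le _ _
    _ ≤ ‖(W' - W)ᵀ‖ * Nz := by gcongr
    _ = Nz * ‖W' - W‖ := by rw [← hWW]; ring
  calc ‖_ + _ + _ + _ + _ - _ - _‖ ≤ _ := norm_sub_le_of_le (norm_sub_le_of_le
      (norm_add_le_of_le (norm_add_le_of_le (norm_add_le_of_le
        (norm_add_le_of_le t1 t2) t3) t4) t5) t6) t7
  _ ≤ NW ^ 2 * ‖p' - p‖ + (2 * NW * Np + Nb + Nz) * ‖W' - W‖ +
        NW * ‖b' - b‖ + NW * ‖z' - z‖ := by ring_nf; rfl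
end

section
/- Let H be a real inner product space, ν > 0, ρ > 0, and a, p, u ∈ H. For v ∈ H define Φ_v : H → ℝ by Φ_v(q') = (ν/2)‖a − q'‖² + ⟨v, p − q'⟩ + (ρ/2)‖p − q'‖². Suppose q⁺ minimizes Φ_u over H, and set u⁺ = u + ρ(p − q⁺). Then the gradient of Φ_{u⁺} at q⁺ equals u − u⁺; in particular ‖∇Φ_{u⁺}(q⁺)‖ = ‖u⁺ − u‖. -/
open scoped RealInnerProductSpace

theorem phi_deriv {H : Type*} [NormedAddCommGroup H] [InnerProductSpace ℝ H]
    (ν ρ : ℝ) (a p : H) (v q : H) :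
    HasFDerivAt (fun q' : H => (ν / 2) * ‖a - q'‖ ^ 2 + ⟪v, p - q'⟫ + (ρ / 2) * ‖p - q'‖ ^ 2)
      (innerSL ℝ ((ν + ρ) • q - ν • a - ρ • p - v)) q := by
  have hsub1 : HasFDerivAt (fun q' : H => a - q')
      ((0 : H →L[ℝ] H) - ContinuousLinearMap.id ℝ H) q :=
    (hasFDerivAt_const a q).sub (hasFDerivAt_id q)
  have hsub2 : HasFDerivAt (fun q' : H => p - q')
      ((0 : H →L[ℝ] H) - ContinuousLinearMap.id ℝ H) q :=
    (hasFDerivAt_const p q).sub (hasFDerivAt_id q)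
  have h1 := hsub1.norm_sq.const_mul (ν / 2)
  have h3 := hsub2.norm_sq.const_mul (ρ / 2)
  have h2 : HasFDerivAt (fun q' : H => ⟪v, p - q'⟫)
      ((innerSL ℝ v).comp ((0 : H →L[ℝ] H) - ContinuousLinearMap.id ℝ H)) q :=
    (innerSL ℝ v).hasFDerivAt.comp q hsub2
  have := (h1.add h2).add h3
  convert this using 1
  case e'_8 => rfl
  case e'_9 => rfl
  case e'_11 => rfl
  ext w
  simp only [ContinuousLinearMap.add_apply, ContinuousLinearMap.coe_smul',
    ContinuousLinearMap.smul_apply, ContinuousLinearMap.comp_apply,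
    ContinuousLinearMap.sub_apply, ContinuousLinearMap.zero_apply,
    ContinuousLinearMap.id_apply, innerSL_apply_apply, ContinuousLinearMap.coe_comp',
    Function.comp_apply, Pi.smul_apply, smul_eq_mul, two_smul]
  simp only [inner_sub_left, inner_smul_left, inner_add_left, zero_sub, inner_neg_right,
    RCLike.ofReal_real_eq_id, id_eq, starRingEnd_apply, star_trivial]
  ring

/-- q-component of the Bounded Subgradient lemma of pdADMM: after the q-update and the
dual update `u⁺ = u + ρ(p − q⁺)`, the gradient of `Φ_{u⁺}` at `q⁺` equals `u − u⁺`;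
in particular its norm is `‖u⁺ − u‖`. -/
theorem stmt15 {H : Type*} [NormedAddCommGroup H] [InnerProductSpace ℝ H]
    (ν ρ : ℝ) (hν : 0 < ν) (hρ : 0 < ρ) (a p u : H)
    (Φ : H → H → ℝ)
    (hΦ : ∀ v q' : H, Φ v q' = (ν / 2) * ‖a - q'‖ ^ 2 + ⟪v, p - q'⟫ + (ρ / 2) * ‖p - q'‖ ^ 2)
    (qplus : H) (hmin : ∀ q' : H, Φ u qplus ≤ Φ u q')
    (uplus : H) (hup : uplus = u + ρ • (p - qplus)) :
    HasFDerivAt (Φ uplus) (innerSL ℝ (u - uplus)) qplus ∧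
      ‖u - uplus‖ = ‖uplus - u‖ := by
  have hΦu : Φ u = fun q' : H => (ν / 2) * ‖a - q'‖ ^ 2 + ⟪u, p - q'⟫ + (ρ / 2) * ‖p - q'‖ ^ 2 :=
    funext (hΦ u)
  have hder : HasFDerivAt (Φ u)
      (innerSL ℝ ((ν + ρ) • qplus - ν • a - ρ • p - u)) qplus := by
    rw [hΦu]; exact phi_deriv ν ρ a p u qplus
  have hlocmin : IsLocalMin (Φ u) qplus := (isMinOn_univ_iff.2 hmin).isLocalMin Filter.univ_mem
  have hz := hlocmin.hasFDerivAt_eq_zero hder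
  have hg0 : (ν + ρ) • qplus - ν • a - ρ • p - u = 0 := by
    have := congrArg (fun (L : H →L[ℝ] ℝ) => L ((ν + ρ) • qplus - ν • a - ρ • p - u)) hz
    simp only [innerSL_apply_apply, ContinuousLinearMap.zero_apply] at this
    exact inner_self_eq_zero.mp this
  have key : (ν + ρ) • qplus - ν • a - ρ • p - uplus = u - uplus := by
    have h' : (ν + ρ) • qplus - ν • a - ρ • p = u := by
      have := sub_eq_zero.mp hg0; exact this
    rw [h']
  constructor
  · have hder2 : HasFDerivAt (Φ uplus)
        (innerSL ℝ ((ν + ρ) • qplus - ν • a - ρ • p - uplus)) qplus := by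
      rw [funext (hΦ uplus)]; exact phi_deriv ν ρ a p uplus qplus
    rwa [key] at hder2
  · exact (norm_sub_rev u uplus)
end
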